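/- There exists a constant c > 0 such that for every odd integer n ≥ 3, the product ∏_{ℓ | n} (ℓ − 2)/(ℓ − 1), taken over the (odd) prime divisors ℓ of n, is at least c / log(log n + 2). -/

import Mathlib

open Finset Real

/-- Chebyshev: sum of log p over primes ≤ N is at most N log 4. -/
lemma theta_le (N : ℕ) : ∑ p ∈ (N + 1).primesBelow, Real.log p ≤ N * Real.log 4 := by
  have h1 : ∑ p ∈ (N + 1).primesBelow, Real.log p = Real.log (primorial N) := by
    rw [primorial, Nat.cast_prod, Real.log_prod]
    · rfl
    · intro p hp
      have h := (Finset.mem_filter.mp hp).2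
      exact_mod_cast h.pos.ne'
  rw [h1]
  calc Real.log (primorial N) ≤ Real.log ((4 : ℕ) ^ N : ℕ) := by
        apply Real.log_le_log (by exact_mod_cast primorial_pos N)
        exact_mod_cast primorial_le_4_pow N
    _ = N * Real.log 4 := by
        push_cast
        rw [Real.log_pow]

lemma div_le_factorization_factorial {p N : ℕ} (hp : p.Prime) (hpN : p ≤ N) :
    N / p ≤ (Nat.factorial N).factorization p := by
  rw [← Nat.Prime.pow_dvd_iff_le_factorization hp (Nat.factorial_ne_zero N)]
  rw [Nat.Prime.pow_dvd_factorial_iff hp (Nat.lt_succ_self (Nat.log p N))]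
  have h1 : 1 ∈ Finset.Ico 1 (Nat.log p N + 1) := by
    have : 0 < Nat.log p N := Nat.log_pos hp.one_lt hpN
    simp only [Finset.mem_Ico]
    omega
  have := Finset.single_le_sum (f := fun i => N / p ^ i) (fun i _ => Nat.zero_le _) h1
  simpa using this

/-- Mertens' first theorem (upper bound). -/
lemma mertens1 {N : ℕ} (hN : 1 ≤ N) :
    ∑ p ∈ (N + 1).primesBelow, Real.log p / p ≤ Real.log N + Real.log 4 := by
  have key : ∑ p ∈ (N + 1).primesBelow, ((N / p : ℕ) : ℝ) * Real.log p
      ≤ N * Real.log N := by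
    have h1 : Real.log (Nat.factorial N) = ∑ p ∈ (Nat.factorial N).factorization.support,
        ((Nat.factorial N).factorization p : ℝ) * Real.log p := by
      rw [Real.log_nat_eq_sum_factorization]; rfl
    have hsub : (N + 1).primesBelow ⊆ (Nat.factorial N).factorization.support := by
      intro p hp
      rw [Nat.support_factorization, Nat.mem_primeFactors]
      have hp' := Nat.prime_of_mem_primesBelow hp
      have hlt := Nat.lt_of_mem_primesBelow hp
      exact ⟨hp', Nat.dvd_factorial hp'.pos (by omega), Nat.factorial_ne_zero N⟩
    calc ∑ p ∈ (N + 1).primesBelow, ((N / p : ℕ) : ℝ) * Real.log p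
        ≤ ∑ p ∈ (N + 1).primesBelow,
            ((Nat.factorial N).factorization p : ℝ) * Real.log p := by
          refine Finset.sum_le_sum fun p hp => ?_
          have hp' := Nat.prime_of_mem_primesBelow hp
          have hlt := Nat.lt_of_mem_primesBelow hp
          have hlog : (0:ℝ) ≤ Real.log p :=
            Real.log_nonneg (by exact_mod_cast hp'.one_lt.le)
          have := div_le_factorization_factorial hp' (by omega : p ≤ N)
          exact mul_le_mul_of_nonneg_right (by exact_mod_cast this) hlog
      _ ≤ ∑ p ∈ (Nat.factorial N).factorization.support,
            ((Nat.factorial N).factorization p : ℝ) * Real.log p := by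
          refine Finset.sum_le_sum_of_subset_of_nonneg hsub fun p hp _ => ?_
          have hp' : p.Prime := by
            rw [Nat.support_factorization] at hp
            exact Nat.prime_of_mem_primeFactors hp
          have hlog : (0:ℝ) ≤ Real.log p :=
            Real.log_nonneg (by exact_mod_cast hp'.one_lt.le)
          positivity
      _ = Real.log (Nat.factorial N) := h1.symm
      _ ≤ Real.log ((N : ℝ) ^ N) := by
          apply Real.log_le_log (by exact_mod_cast Nat.factorial_pos N)
          exact_mod_cast Nat.factorial_le_pow N
      _ = N * Real.log N := Real.log_pow N N
  -- now pass from floor to real division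
  have key2 : ∑ p ∈ (N + 1).primesBelow, ((N : ℝ) / p - 1) * Real.log p
      ≤ N * Real.log N := by
    refine le_trans (Finset.sum_le_sum fun p hp => ?_) key
    have hp' := Nat.prime_of_mem_primesBelow hp
    have hppos : (0:ℝ) < p := by exact_mod_cast hp'.pos
    have hlog : (0:ℝ) ≤ Real.log p :=
      Real.log_nonneg (by exact_mod_cast hp'.one_lt.le)
    refine mul_le_mul_of_nonneg_right ?_ hlog
    have : (N : ℝ) / p < (N / p : ℕ) + 1 := by
      rw [div_lt_iff₀ hppos]
      have h2 : N < (N / p + 1) * p := by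
        have := Nat.div_add_mod N p
        have := Nat.mod_lt N hp'.pos
        nlinarith [Nat.div_add_mod N p, Nat.mod_lt N hp'.pos]
      calc (N:ℝ) < ((N / p + 1 : ℕ) : ℝ) * p := by exact_mod_cast h2
        _ = (((N / p : ℕ) : ℝ) + 1) * p := by push_cast; ring
    linarith
  have hsplit : ∑ p ∈ (N + 1).primesBelow, ((N : ℝ) / p - 1) * Real.log p
      = N * (∑ p ∈ (N + 1).primesBelow, Real.log p / p)
        - ∑ p ∈ (N + 1).primesBelow, Real.log p := by
    rw [Finset.mul_sum, ← Finset.sum_sub_distrib]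
    refine Finset.sum_congr rfl fun p hp => ?_
    have hp' := Nat.prime_of_mem_primesBelow hp
    have hppos : (0:ℝ) < p := by exact_mod_cast hp'.pos
    field_simp
  have htheta := theta_le N
  have hNpos : (0:ℝ) < N := by exact_mod_cast hN
  rw [hsplit] at key2
  have : N * (∑ p ∈ (N + 1).primesBelow, Real.log p / p)
      ≤ N * Real.log N + N * Real.log 4 := by linarith
  calc ∑ p ∈ (N + 1).primesBelow, Real.log p / p
      = N * (∑ p ∈ (N + 1).primesBelow, Real.log p / p) / N := by
        field_simp
    _ ≤ (N * Real.log N + N * Real.log 4) / N := by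
        exact div_le_div_of_nonneg_right this hNpos.le
    _ = Real.log N + Real.log 4 := by field_simp

noncomputable def AA (m : ℕ) : ℝ := ∑ p ∈ (m + 1).primesBelow, Real.log p / p

noncomputable def gg (p : ℕ) : ℝ := if p ≤ 3 then 0 else 1 / p

noncomputable def SS (m : ℕ) : ℝ := ∑ p ∈ (m + 1).primesBelow, gg p

noncomputable def Psi (m : ℕ) : ℝ :=
  Real.log (Real.log m) + (1 + Real.log 4)
    - (Real.log m + Real.log 4 - AA m) / Real.log m

lemma AA_nonneg (m : ℕ) : 0 ≤ AA m := by
  refine Finset.sum_nonneg fun p hp => ?_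
  have hp' := Nat.prime_of_mem_primesBelow hp
  have h1 : (1:ℝ) ≤ p := by exact_mod_cast hp'.one_lt.le
  have := Real.log_nonneg h1
  positivity

lemma AA_succ (N : ℕ) :
    AA (N + 1) = AA N + (if (N + 1).Prime then Real.log (N + 1) / (N + 1) else 0) := by
  unfold AA
  rw [show (N + 1 + 1) = (N + 1).succ from rfl, Nat.primesBelow_succ]
  split_ifs with h
  · rw [Finset.sum_insert (Nat.notMem_primesBelow _)]
    push_cast
    ring
  · ring

lemma SS_succ (N : ℕ) :
    SS (N + 1) = SS N + (if (N + 1).Prime then gg (N + 1) else 0) := by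
  unfold SS
  rw [show (N + 1 + 1) = (N + 1).succ from rfl, Nat.primesBelow_succ]
  split_ifs with h
  · rw [Finset.sum_insert (Nat.notMem_primesBelow _)]
    ring
  · ring

lemma log_three_gt_one : (1:ℝ) < Real.log 3 := by
  rw [show (1:ℝ) = Real.log (Real.exp 1) by rw [Real.log_exp]]
  apply Real.log_lt_log (Real.exp_pos 1)
  calc Real.exp 1 < 2.7182818286 := Real.exp_one_lt_d9
    _ < 3 := by norm_num

lemma log_le_of_le {m k : ℕ} (hm : 0 < m) (h : m ≤ k) : Real.log m ≤ Real.log k :=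
  Real.log_le_log (by exact_mod_cast hm) (by exact_mod_cast h)

/-- key induction: `SS N ≤ Psi N` for `N ≥ 3`. -/
lemma SS_le_Psi {N : ℕ} (hN : 3 ≤ N) : SS N ≤ Psi N := by
  induction N, hN using Nat.le_induction with
  | base =>
    have hS : SS 3 = 0 := by
      refine Finset.sum_eq_zero fun p hp => ?_
      have := Nat.lt_of_mem_primesBelow hp
      unfold gg
      rw [if_pos (by omega)]
    have hl3 : (1:ℝ) < Real.log 3 := log_three_gt_one
    have hA : 0 ≤ AA 3 := AA_nonneg 3
    have hlog4 : 0 ≤ Real.log 4 := Real.log_nonneg (by norm_num)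
    have hloglog : 0 ≤ Real.log (Real.log 3) := Real.log_nonneg hl3.le
    unfold Psi
    rw [hS]
    push_cast
    have hdiv : (Real.log 3 + Real.log 4 - AA 3) / Real.log 3 ≤ 1 + Real.log 4 := by
      rw [div_le_iff₀ (by linarith)]
      nlinarith
    linarith
  | succ N hN3 ih =>
    have hcast : ((N + 1 : ℕ) : ℝ) = (N : ℝ) + 1 := by push_cast; ring
    have ha1 : (1:ℝ) < Real.log N := by
      calc (1:ℝ) < Real.log 3 := log_three_gt_one
        _ ≤ Real.log N := log_le_of_le (by norm_num) hN3
    set a := Real.log N with hadef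
    set b := Real.log ((N : ℝ) + 1) with hbdef
    have hab : a < b := by
      apply Real.log_lt_log (by positivity)
      linarith
    have hb1 : (1:ℝ) < b := lt_trans ha1 hab
    have ha0 : (0:ℝ) < a := by linarith
    have hb0 : (0:ℝ) < b := by linarith
    have hkey : (b - a) / b ≤ Real.log b - Real.log a := by
      have h1 : Real.log (a / b) ≤ a / b - 1 := Real.log_le_sub_one_of_pos (by positivity)
      rw [Real.log_div (ne_of_gt ha0) (ne_of_gt hb0)] at h1
      have : (b - a) / b = 1 - a / b := by field_simp
      linarith
    have hAle : AA N ≤ a + Real.log 4 := mertens1 (by omega)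
    have hAnn : 0 ≤ AA N := AA_nonneg N
    have hstep : SS (N + 1) ≤ SS N + (if (N + 1).Prime then gg (N + 1) else 0) :=
      le_of_eq (SS_succ N)
    set t : ℝ := if (N + 1).Prime then Real.log (N + 1) / (N + 1) else 0 with htdef
    have hA1 : AA (N + 1) = AA N + t := AA_succ N
    have htb : t = (if (N + 1).Prime then b / ((N:ℝ) + 1) else 0) := by
      rw [htdef, hbdef]
    have hdelta : (if (N + 1).Prime then gg (N + 1) else 0) ≤ t / b := by
      rw [htb]
      split_ifs with h
      · unfold gg
        rw [if_neg (by omega), hcast]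
        have he : b / ((N:ℝ) + 1) / b = 1 / ((N:ℝ) + 1) := by
          field_simp
        rw [he]
      · simp
    have hpsiN : Psi N = Real.log a + (1 + Real.log 4) - (a + Real.log 4 - AA N) / a := rfl
    have hpsiN1 : Psi (N + 1)
        = Real.log b + (1 + Real.log 4) - (b + Real.log 4 - (AA N + t)) / b := by
      unfold Psi
      rw [hA1, hcast, ← hbdef]
    have hpsi : Psi N + t / b ≤ Psi (N + 1) := by
      rw [hpsiN, hpsiN1]
      have h2 : (0:ℝ) ≤ 1 / a - 1 / b := by
        rw [sub_nonneg]
        exact one_div_le_one_div_of_le ha0 hab.le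
      have h3 : (-a) * (1 / a - 1 / b) ≤ (Real.log 4 - AA N) * (1 / a - 1 / b) :=
        mul_le_mul_of_nonneg_right (by linarith) h2
      have h4 : (-a) * (1 / a - 1 / b) = -(1 - a / b) := by field_simp
      have h5 : (b - a) / b = 1 - a / b := by field_simp
      have e1 : (a + Real.log 4 - AA N) / a = 1 + (Real.log 4 - AA N) * (1 / a) := by
        field_simp; ring
      have e2 : (b + Real.log 4 - (AA N + t)) / b
          = 1 + (Real.log 4 - AA N) * (1 / b) - t * (1 / b) := by field_simp; ring
      have e3 : t / b = t * (1 / b) := by ring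
      nlinarith [h3]
    calc SS (N + 1) ≤ SS N + t / b := by linarith [hdelta, hstep]
      _ ≤ Psi N + t / b := by linarith [ih]
      _ ≤ Psi (N + 1) := hpsi

/-- Mertens' second theorem (upper bound). -/
lemma mertens2 {N : ℕ} (hN : 3 ≤ N) :
    ∑ p ∈ (N + 1).primesBelow, (1:ℝ) / p
      ≤ Real.log (Real.log N) + (2 + Real.log 4) := by
  have hPsi : Psi N ≤ Real.log (Real.log N) + (1 + Real.log 4) := by
    unfold Psi
    have h1 : (1:ℝ) < Real.log N :=
      lt_of_lt_of_le log_three_gt_one (log_le_of_le (by norm_num) hN)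
    have h2 : AA N ≤ Real.log N + Real.log 4 := mertens1 (by omega)
    have h3 : 0 ≤ (Real.log N + Real.log 4 - AA N) / Real.log N := by
      apply div_nonneg (by linarith) (by linarith)
    linarith
  have hS := SS_le_Psi hN
  rw [← Finset.sum_filter_add_sum_filter_not ((N+1).primesBelow) (fun p => p ≤ 3)
    (fun p => (1:ℝ)/p)]
  have hbig : ∑ p ∈ (N+1).primesBelow with ¬ p ≤ 3, (1:ℝ)/p ≤ SS N := by
    unfold SS
    calc ∑ p ∈ (N+1).primesBelow with ¬ p ≤ 3, (1:ℝ)/p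
        = ∑ p ∈ (N+1).primesBelow with ¬ p ≤ 3, gg p := by
          refine Finset.sum_congr rfl fun p hp => ?_
          unfold gg
          rw [if_neg (Finset.mem_filter.mp hp).2]
      _ ≤ ∑ p ∈ (N+1).primesBelow, gg p := by
          refine Finset.sum_le_sum_of_subset_of_nonneg (Finset.filter_subset _ _)
            fun p _ _ => ?_
          unfold gg
          split_ifs
          · exact le_refl 0
          · positivity
  have hsmall : ∑ p ∈ (N+1).primesBelow with p ≤ 3, (1:ℝ)/p ≤ 1 := by
    calc ∑ p ∈ (N+1).primesBelow with p ≤ 3, (1:ℝ)/p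
        ≤ ∑ p ∈ ({2, 3} : Finset ℕ), (1:ℝ)/p := by
          refine Finset.sum_le_sum_of_subset_of_nonneg ?_ fun p hp _ => by positivity
          intro p hp
          rw [Finset.mem_filter] at hp
          have := (Nat.prime_of_mem_primesBelow hp.1).two_le
          have := hp.2
          simp only [Finset.mem_insert, Finset.mem_singleton]
          omega
      _ ≤ 1 := by norm_num
  linarith

lemma tele {N : ℕ} (hN : 2 ≤ N) :
    ∑ k ∈ Finset.Icc 3 N, (2:ℝ) / (k * ((k:ℝ) - 2))
      ≤ 3/2 - 1/((N:ℝ) - 1) - 1/N := by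
  induction N, hN using Nat.le_induction with
  | base => simp; norm_num
  | succ N hN2 ih =>
    have hins : Finset.Icc 3 (N + 1) = insert (N + 1) (Finset.Icc 3 N) :=
      (Finset.insert_Icc_right_eq_Icc_add_one (by omega)).symm
    rw [hins, Finset.sum_insert (by simp)]
    have hN1 : (2:ℝ) ≤ (N:ℝ) := by exact_mod_cast hN2
    have e : ((N + 1 : ℕ) : ℝ) = (N:ℝ) + 1 := by push_cast; ring
    rw [e]
    have hterm : (2:ℝ) / (((N:ℝ) + 1) * ((N:ℝ) + 1 - 2))
        = 1/((N:ℝ) - 1) - 1/((N:ℝ) + 1) := by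
      have h1 : ((N:ℝ) + 1) ≠ 0 := by linarith
      have h2 : ((N:ℝ) - 1) ≠ 0 := by intro h; rw [sub_eq_zero] at h; linarith
      have h3 : ((N:ℝ) + 1 - 2) = (N:ℝ) - 1 := by ring
      rw [h3, div_sub_div _ _ h2 h1, div_eq_div_iff (by positivity) (mul_ne_zero h2 h1)]
      ring
    rw [hterm]
    have : (1:ℝ)/((N:ℝ)+1-1) = 1/(N:ℝ) := by norm_num
    linarith [ih]

lemma prod_small {N : ℕ} (hN : 3 ≤ N) :
    Real.exp (-(Real.log (Real.log N) + (2 + Real.log 4) + 3/2))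
      ≤ ∏ p ∈ (N + 1).primesBelow.erase 2, (((p:ℝ) - 2) / ((p:ℝ) - 1)) := by
  set T := (N + 1).primesBelow.erase 2 with hT
  have hmem : ∀ p ∈ T, 3 ≤ p ∧ p ≤ N := by
    intro p hp
    have h2 := Finset.ne_of_mem_erase hp
    have hp' := Nat.prime_of_mem_primesBelow (Finset.mem_of_mem_erase hp)
    have hlt := Nat.lt_of_mem_primesBelow (Finset.mem_of_mem_erase hp)
    have := hp'.two_le
    constructor <;> omega
  have hfpos : ∀ p ∈ T, (0:ℝ) < ((p:ℝ) - 2) / ((p:ℝ) - 1) := by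
    intro p hp
    have h3 : (3:ℝ) ≤ p := by exact_mod_cast (hmem p hp).1
    apply div_pos <;> linarith
  have hprodpos : (0:ℝ) < ∏ p ∈ T, (((p:ℝ) - 2) / ((p:ℝ) - 1)) :=
    Finset.prod_pos hfpos
  rw [← Real.exp_log hprodpos]
  apply Real.exp_le_exp.mpr
  rw [Real.log_prod (fun p hp => ne_of_gt (hfpos p hp))]
  have hterm : ∀ p ∈ T, -(1/(p:ℝ) + 2/((p:ℝ) * ((p:ℝ) - 2)))
      ≤ Real.log (((p:ℝ) - 2) / ((p:ℝ) - 1)) := by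
    intro p hp
    have h3 : (3:ℝ) ≤ p := by exact_mod_cast (hmem p hp).1
    have hp2 : (0:ℝ) < (p:ℝ) - 2 := by linarith
    have hp1 : (0:ℝ) < (p:ℝ) - 1 := by linarith
    have hlog1 : Real.log (((p:ℝ) - 1) / ((p:ℝ) - 2)) ≤ 1/((p:ℝ) - 2) := by
      have := Real.log_le_sub_one_of_pos (div_pos hp1 hp2)
      have he : ((p:ℝ) - 1) / ((p:ℝ) - 2) - 1 = 1/((p:ℝ) - 2) := by
        rw [div_sub_one (ne_of_gt hp2)]
        congr 1
        ring
      linarith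
    have hsplit : 1/((p:ℝ) - 2) = 1/(p:ℝ) + 2/((p:ℝ) * ((p:ℝ) - 2)) := by
      have hp0 : (0:ℝ) < (p:ℝ) := by linarith
      rw [div_add_div _ _ (ne_of_gt hp0) (mul_ne_zero (ne_of_gt hp0) (ne_of_gt hp2)),
        div_eq_div_iff (ne_of_gt hp2) (mul_ne_zero (ne_of_gt hp0) (mul_ne_zero (ne_of_gt hp0) (ne_of_gt hp2)))]
      ring
    have hflip : Real.log (((p:ℝ) - 2) / ((p:ℝ) - 1))
        = - Real.log (((p:ℝ) - 1) / ((p:ℝ) - 2)) := by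
      rw [← Real.log_inv]
      congr 1
      rw [inv_div]
    rw [hflip]
    rw [hsplit] at hlog1
    linarith
  calc -(Real.log (Real.log N) + (2 + Real.log 4) + 3/2)
      ≤ ∑ p ∈ T, -(1/(p:ℝ) + 2/((p:ℝ) * ((p:ℝ) - 2))) := by
        have hsum1 : ∑ p ∈ T, (1:ℝ)/p ≤ Real.log (Real.log N) + (2 + Real.log 4) := by
          refine le_trans (Finset.sum_le_sum_of_subset_of_nonneg
            (Finset.erase_subset _ _) fun p hp _ => by positivity) (mertens2 hN)
        have hsum2 : ∑ p ∈ T, (2:ℝ)/((p:ℝ) * ((p:ℝ) - 2)) ≤ 3/2 := by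
          have hsub : T ⊆ Finset.Icc 3 N := by
            intro p hp
            rw [Finset.mem_Icc]
            exact hmem p hp
          refine le_trans (Finset.sum_le_sum_of_subset_of_nonneg hsub
            fun k hk _ => ?_) ?_
          · have h3 : 3 ≤ k := (Finset.mem_Icc.mp hk).1
            have h3' : (3:ℝ) ≤ (k:ℝ) := by exact_mod_cast h3
            have : (0:ℝ) < (k:ℝ) - 2 := by linarith
            positivity
          · refine le_trans (tele (by omega)) ?_
            have hN1 : (1:ℝ) < (N:ℝ) := by exact_mod_cast by omega
            have h1 : (0:ℝ) < 1/((N:ℝ) - 1) := by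
              apply div_pos one_pos; linarith
            have h2 : (0:ℝ) < 1/(N:ℝ) := by positivity
            linarith
        have heq : ∑ p ∈ T, -(1/(p:ℝ) + 2/((p:ℝ) * ((p:ℝ) - 2)))
            = -(∑ p ∈ T, (1:ℝ)/p + ∑ p ∈ T, (2:ℝ)/((p:ℝ) * ((p:ℝ) - 2))) := by
          rw [← Finset.sum_add_distrib, Finset.sum_neg_distrib]
        rw [heq]
        linarith
    _ ≤ ∑ p ∈ T, Real.log (((p:ℝ) - 2) / ((p:ℝ) - 1)) :=
        Finset.sum_le_sum hterm

/-- There is `c > 0` such that for every odd integer `n ≥ 3`, the product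
`∏_{ℓ ∣ n} (ℓ-2)/(ℓ-1)` over the prime divisors `ℓ` of `n` is at least
`c / log(log n + 2)`. -/
theorem stmt16 :
    ∃ c : ℝ, 0 < c ∧ ∀ n : ℕ, 3 ≤ n → Odd n →
      c / Real.log (Real.log n + 2)
        ≤ ∏ ℓ ∈ n.primeFactors, (((ℓ : ℝ) - 2) / ((ℓ : ℝ) - 1)) := by
  refine ⟨Real.exp (-(2 + Real.log 4 + 3/2)) / 58, by positivity, ?_⟩
  intro n hn hodd
  set C₁ := Real.exp (-(2 + Real.log 4 + 3/2)) with hC₁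
  have hC₁pos : 0 < C₁ := Real.exp_pos _
  have hnR : (3:ℝ) ≤ (n:ℝ) := by exact_mod_cast hn
  have hlogn1 : (1:ℝ) < Real.log n :=
    lt_of_lt_of_le log_three_gt_one (log_le_of_le (by norm_num) hn)
  set y : ℕ := ⌊Real.log n⌋₊ + 55 with hy
  have hy56 : 56 ≤ y := by
    have : 1 ≤ ⌊Real.log n⌋₊ := Nat.le_floor (by exact_mod_cast hlogn1.le)
    omega
  have hyR56 : (56:ℝ) ≤ (y:ℝ) := by exact_mod_cast hy56
  have hylogn : Real.log n ≤ (y:ℝ) := by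
    have h1 := Nat.lt_floor_add_one (Real.log n)
    have : ((⌊Real.log n⌋₊ : ℝ) + 55 : ℝ) = (y:ℝ) := by
      rw [hy]; push_cast; ring
    linarith
  have hyle : (y:ℝ) ≤ Real.log n + 55 := by
    have h1 := Nat.floor_le (le_of_lt (lt_trans one_pos hlogn1))
    rw [hy]; push_cast; linarith
  have hlogy4 : (4:ℝ) ≤ Real.log y := by
    have hexp4 : Real.exp 4 ≤ 56 := by
      have h1 : Real.exp 4 = (Real.exp 1)^(4:ℕ) := by
        rw [← Real.exp_nat_mul]; norm_num
      have h2 := Real.exp_one_lt_d9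
      rw [h1]
      calc (Real.exp 1)^(4:ℕ) ≤ (2.7182818286:ℝ)^(4:ℕ) := by
            apply pow_le_pow_left₀ (Real.exp_pos 1).le h2.le
        _ ≤ 56 := by norm_num
    calc (4:ℝ) = Real.log (Real.exp 4) := (Real.log_exp 4).symm
      _ ≤ Real.log y := Real.log_le_log (Real.exp_pos 4) (le_trans hexp4 hyR56)
  have hlogy0 : (0:ℝ) < Real.log y := by linarith
  -- all prime factors are ≥ 3
  have hP3 : ∀ ℓ ∈ n.primeFactors, 3 ≤ ℓ := by
    intro ℓ hℓ
    rw [Nat.mem_primeFactors] at hℓ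
    have h2 := hℓ.1.two_le
    rcases Nat.lt_or_ge ℓ 3 with h | h
    · interval_cases ℓ
      · exact absurd (hodd.of_dvd_nat hℓ.2.1) (by decide)
    · exact h
  have hfpos : ∀ ℓ ∈ n.primeFactors, (0:ℝ) < ((ℓ:ℝ) - 2) / ((ℓ:ℝ) - 1) := by
    intro ℓ hℓ
    have h3 : (3:ℝ) ≤ (ℓ:ℝ) := by exact_mod_cast hP3 ℓ hℓ
    apply div_pos <;> linarith
  have hfle1 : ∀ ℓ ∈ n.primeFactors, ((ℓ:ℝ) - 2) / ((ℓ:ℝ) - 1) ≤ 1 := by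
    intro ℓ hℓ
    have h3 : (3:ℝ) ≤ (ℓ:ℝ) := by exact_mod_cast hP3 ℓ hℓ
    rw [div_le_one (by linarith)]
    linarith
  rw [← Finset.prod_filter_mul_prod_filter_not n.primeFactors (fun ℓ => ℓ ≤ y)]
  set Ps := n.primeFactors.filter (fun ℓ => ℓ ≤ y) with hPs
  set Pl := n.primeFactors.filter (fun ℓ => ¬ ℓ ≤ y) with hPl
  -- small part
  have hsmall : C₁ / Real.log y ≤ ∏ ℓ ∈ Ps, (((ℓ:ℝ) - 2) / ((ℓ:ℝ) - 1)) := by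
    have hsub : Ps ⊆ (y + 1).primesBelow.erase 2 := by
      intro ℓ hℓ
      rw [hPs, Finset.mem_filter] at hℓ
      rw [Finset.mem_erase, Nat.mem_primesBelow]
      have h3 := hP3 ℓ hℓ.1
      have hpr := Nat.prime_of_mem_primeFactors hℓ.1
      exact ⟨by omega, by omega, hpr⟩
    have hTle : ∏ p ∈ (y + 1).primesBelow.erase 2, (((p:ℝ) - 2) / ((p:ℝ) - 1))
        ≤ ∏ ℓ ∈ Ps, (((ℓ:ℝ) - 2) / ((ℓ:ℝ) - 1)) := by
      rw [← Finset.prod_sdiff hsub]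
      have hPspos : (0:ℝ) < ∏ ℓ ∈ Ps, (((ℓ:ℝ) - 2) / ((ℓ:ℝ) - 1)) :=
        Finset.prod_pos fun ℓ hℓ => hfpos ℓ (Finset.mem_of_mem_filter ℓ hℓ)
      have hdle1 : ∏ p ∈ (y + 1).primesBelow.erase 2 \ Ps,
          (((p:ℝ) - 2) / ((p:ℝ) - 1)) ≤ 1 := by
        apply Finset.prod_le_one
        · intro p hp
          have hp' := Finset.mem_sdiff.mp hp |>.1
          have h2 := Finset.ne_of_mem_erase hp'
          have hpr := Nat.prime_of_mem_primesBelow (Finset.mem_of_mem_erase hp')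
          have h3 : (3:ℝ) ≤ (p:ℝ) := by
            have := hpr.two_le
            exact_mod_cast by omega
          apply le_of_lt; apply div_pos <;> linarith
        · intro p hp
          have hp' := Finset.mem_sdiff.mp hp |>.1
          have h2 := Finset.ne_of_mem_erase hp'
          have hpr := Nat.prime_of_mem_primesBelow (Finset.mem_of_mem_erase hp')
          have h3 : (3:ℝ) ≤ (p:ℝ) := by
            have := hpr.two_le
            exact_mod_cast by omega
          rw [div_le_one (by linarith)]
          linarith
      calc (∏ p ∈ (y + 1).primesBelow.erase 2 \ Ps, (((p:ℝ) - 2) / ((p:ℝ) - 1)))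
            * ∏ ℓ ∈ Ps, (((ℓ:ℝ) - 2) / ((ℓ:ℝ) - 1))
          ≤ 1 * ∏ ℓ ∈ Ps, (((ℓ:ℝ) - 2) / ((ℓ:ℝ) - 1)) := by
            apply mul_le_mul_of_nonneg_right hdle1 hPspos.le
        _ = ∏ ℓ ∈ Ps, (((ℓ:ℝ) - 2) / ((ℓ:ℝ) - 1)) := one_mul _
    have hps := prod_small (show 3 ≤ y by omega)
    have hEeq : Real.exp (-(Real.log (Real.log y) + (2 + Real.log 4) + 3/2))
        = C₁ / Real.log y := by
      rw [hC₁, ← Real.exp_log hlogy0]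
      rw [← Real.exp_sub]
      congr 1
      rw [Real.log_exp]
      ring
    rw [hEeq] at hps
    exact le_trans hps hTle
  -- large part
  have hlarge : (1:ℝ)/2 ≤ ∏ ℓ ∈ Pl, (((ℓ:ℝ) - 2) / ((ℓ:ℝ) - 1)) := by
    set k := Pl.card with hk
    have hyk : y ^ k ≤ n := by
      have h1 : y ^ k ≤ ∏ ℓ ∈ Pl, ℓ := by
        apply Finset.pow_card_le_prod
        intro ℓ hℓ
        have := (Finset.mem_filter.mp hℓ).2
        omega
      have h2 : (∏ ℓ ∈ Pl, ℓ) ∣ n := by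
        refine dvd_trans (Finset.prod_dvd_prod_of_subset Pl n.primeFactors _
          (Finset.filter_subset _ _)) (Nat.prod_primeFactors_dvd n)
      exact le_trans h1 (Nat.le_of_dvd (by omega) h2)
    have hklog : (k:ℝ) * Real.log y ≤ Real.log n := by
      calc (k:ℝ) * Real.log y = Real.log ((y:ℝ) ^ k) := (Real.log_pow (n := k) (x := (y:ℝ))).symm
        _ ≤ Real.log n := by
          apply Real.log_le_log (by positivity)
          exact_mod_cast hyk
    have h4k : 4 * (k:ℝ) ≤ (y:ℝ) := by
      nlinarith [hklog, hlogy4, hylogn, Nat.cast_nonneg (α := ℝ) k]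
    have hbern : (1:ℝ) - 2 * k / y ≤ (1 - 2/(y:ℝ)) ^ k := by
      have := one_add_mul_le_pow (a := -(2/(y:ℝ))) (by
        have : (2:ℝ)/(y:ℝ) ≤ 2 := by
          rw [div_le_iff₀ (by linarith)]
          linarith
        linarith) k
      calc (1:ℝ) - 2 * k / y = 1 + (k:ℝ) * (-(2/(y:ℝ))) := by ring
        _ ≤ (1 + -(2/(y:ℝ))) ^ k := this
        _ = (1 - 2/(y:ℝ)) ^ k := by ring_nf
    have hprodge : (1 - 2/(y:ℝ)) ^ k ≤ ∏ ℓ ∈ Pl, (((ℓ:ℝ) - 2) / ((ℓ:ℝ) - 1)) := by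
      rw [← Finset.prod_const]
      apply Finset.prod_le_prod
      · intro ℓ _
        have : (2:ℝ)/(y:ℝ) ≤ 2/56 := by
          apply div_le_div_of_nonneg_left (by norm_num) (by norm_num) hyR56
        linarith
      · intro ℓ hℓ
        have hgt : y < ℓ := by
          have := (Finset.mem_filter.mp hℓ).2
          omega
        have hgtR : (y:ℝ) < (ℓ:ℝ) := by exact_mod_cast hgt
        have hl0 : (0:ℝ) < (ℓ:ℝ) := by linarith
        calc (1:ℝ) - 2/(y:ℝ) ≤ 1 - 2/(ℓ:ℝ) := by
              have : 2/(ℓ:ℝ) ≤ 2/(y:ℝ) := by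
                apply div_le_div_of_nonneg_left (by norm_num) (by linarith) hgtR.le
              linarith
          _ = ((ℓ:ℝ) - 2)/(ℓ:ℝ) := by field_simp
          _ ≤ ((ℓ:ℝ) - 2)/((ℓ:ℝ) - 1) := by
              apply div_le_div_of_nonneg_left ?_ ?_ (by linarith)
              · linarith
              · linarith
    have h2ky : 2 * (k:ℝ) / y ≤ 1/2 := by
      rw [div_le_iff₀ (by linarith)]
      linarith
    calc (1:ℝ)/2 ≤ 1 - 2 * k / y := by linarith
      _ ≤ (1 - 2/(y:ℝ)) ^ k := hbern
      _ ≤ _ := hprodge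
  -- combine
  have hsmallpos : (0:ℝ) < ∏ ℓ ∈ Ps, (((ℓ:ℝ) - 2) / ((ℓ:ℝ) - 1)) :=
    Finset.prod_pos fun ℓ hℓ => hfpos ℓ (Finset.mem_of_mem_filter ℓ hℓ)
  have hcombine : C₁ / Real.log y * (1/2)
      ≤ (∏ ℓ ∈ Ps, (((ℓ:ℝ) - 2) / ((ℓ:ℝ) - 1)))
        * ∏ ℓ ∈ Pl, (((ℓ:ℝ) - 2) / ((ℓ:ℝ) - 1)) := by
    apply mul_le_mul hsmall hlarge (by norm_num) hsmallpos.le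
  -- compare log y with log (log n + 2)
  set L := Real.log (Real.log n + 2) with hL
  have hL1 : (1:ℝ) < L := by
    calc (1:ℝ) < Real.log 3 := log_three_gt_one
      _ ≤ L := Real.log_le_log (by norm_num) (by linarith)
  have hlogy29 : Real.log y ≤ 29 * L := by
    have h1 : Real.log y ≤ Real.log (Real.log n + 55) :=
      Real.log_le_log (by exact_mod_cast by omega) hyle
    have h2 : Real.log (Real.log n + 55) ≤ Real.log (28 * (Real.log n + 2)) :=
      Real.log_le_log (by linarith) (by linarith)
    have h3 : Real.log (28 * (Real.log n + 2)) = Real.log 28 + L := by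
      rw [Real.log_mul (by norm_num) (by linarith)]
    have h4 : Real.log 28 ≤ 28 := by
      have := Real.log_le_sub_one_of_pos (show (0:ℝ) < 28 by norm_num)
      linarith
    have h5 : Real.log 28 ≤ 28 * L := by nlinarith [Real.log_nonneg (show (1:ℝ) ≤ 28 by norm_num)]
    linarith
  have hfinal : C₁ / 58 / L ≤ C₁ / Real.log y * (1/2) := by
    have e1 : C₁ / 58 / L = C₁ / (58 * L) := by rw [div_div]
    have e2 : C₁ / Real.log y * (1/2) = C₁ / (Real.log y * 2) := by
      rw [mul_one_div, div_div]
    rw [e1, e2]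
    apply div_le_div_of_nonneg_left hC₁pos.le (by positivity) (by linarith)
  calc C₁ / 58 / L ≤ C₁ / Real.log y * (1/2) := hfinal
    _ ≤ _ := hcombine
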